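/- arXiv:1409.6652 — 3 statements merged into one kernel-verified Lean document; each statement's English description precedes it below -/
import Mathlib

section
/- Let α : [0, ℓ] → ℝⁿ be a unit-speed curve (|α'(t)| = 1 for all t) whose derivative α' is Lipschitz with constant Λ > 0. Then for all s, t ∈ [0, ℓ] with |s − t| ≤ 1/Λ one has |α(s) − α(t)| ≥ |s − t| − (Λ/2)|s − t|², and in particular |α(s) − α(t)| ≥ |s − t|/2. -/
open Set

/-- A unit-speed curve with Lipschitz derivative (constant `Λ`) satisfies
`‖α s - α t‖ ≥ |s - t| - (Λ/2)|s - t|²` for `|s - t| ≤ 1/Λ`, hence `‖α s - α t‖ ≥ |s - t|/2`. -/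
theorem stmt_0 (n : ℕ) (ℓ Λ : ℝ) (hΛ : 0 < Λ)
    (α α' : ℝ → EuclideanSpace ℝ (Fin n))
    (hderiv : ∀ t ∈ Icc 0 ℓ, HasDerivAt α (α' t) t)
    (hunit : ∀ t ∈ Icc 0 ℓ, ‖α' t‖ = 1)
    (hlip : ∀ s ∈ Icc 0 ℓ, ∀ t ∈ Icc 0 ℓ, ‖α' s - α' t‖ ≤ Λ * |s - t|) :
    ∀ s ∈ Icc 0 ℓ, ∀ t ∈ Icc 0 ℓ, |s - t| ≤ 1 / Λ →
      |s - t| - Λ / 2 * |s - t| ^ 2 ≤ ‖α s - α t‖ ∧ |s - t| / 2 ≤ ‖α s - α t‖ := by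
  -- main inequality for t ≤ s
  have key : ∀ s ∈ Icc 0 ℓ, ∀ t ∈ Icc 0 ℓ, t ≤ s →
      (s - t) - Λ / 2 * (s - t) ^ 2 ≤ ‖α s - α t‖ := by
    intro s hs t ht hts
    set e := α' t with he
    set g : ℝ → ℝ := fun r => inner ℝ (α r) e - (r - Λ / 2 * (r - t) ^ 2) with hg
    have hsub : Icc t s ⊆ Icc 0 ℓ := Icc_subset_Icc ht.1 hs.2
    have hgderiv : ∀ r ∈ Icc t s,
        HasDerivAt g ((inner ℝ (α' r) e : ℝ) - (1 - Λ * (r - t))) r := by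
      intro r hr
      have h1 : HasDerivAt (fun r => (inner ℝ (α r) e : ℝ)) (inner ℝ (α' r) e) r := by
        have := (hderiv r (hsub hr)).inner ℝ (hasDerivAt_const r e)
        simpa using this
      have h2 : HasDerivAt (fun r => r - Λ / 2 * (r - t) ^ 2) (1 - Λ * (r - t)) r := by
        have h3 : HasDerivAt (fun r : ℝ => Λ / 2 * (r - t) ^ 2)
            (Λ / 2 * (2 * (r - t) ^ 1 * 1)) r := by
          exact (((hasDerivAt_id r).sub_const t).pow 2).const_mul (Λ / 2)
        have : HasDerivAt (fun r => r - Λ / 2 * (r - t) ^ 2) (1 - Λ / 2 * (2 * (r - t) ^ 1 * 1)) r :=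
          (hasDerivAt_id r).sub h3
        convert this using 1
        ring
      exact h1.sub h2
    have hmono : MonotoneOn g (Icc t s) := by
      apply monotoneOn_of_hasDerivWithinAt_nonneg (convex_Icc t s)
        (f' := fun r => (inner ℝ (α' r) e : ℝ) - (1 - Λ * (r - t)))
      · intro r hr
        exact (hgderiv r hr).continuousAt.continuousWithinAt
      · intro r hr
        exact (hgderiv r (interior_subset hr)).hasDerivWithinAt
      · intro r hr
        rw [interior_Icc] at hr
        have hr' : r ∈ Icc t s := Ioo_subset_Icc_self hr
        have h1 : (inner ℝ (α' r) e : ℝ) = 1 + inner ℝ (α' r - e) e := by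
          have : (inner ℝ (e) e : ℝ) = 1 := by
            rw [real_inner_self_eq_norm_sq, hunit t ht]; norm_num
          rw [inner_sub_left, this]; ring
        have h2 : |(inner ℝ (α' r - e) e : ℝ)| ≤ Λ * (r - t) := by
          calc |(inner ℝ (α' r - e) e : ℝ)| ≤ ‖α' r - e‖ * ‖e‖ := abs_real_inner_le_norm _ _
            _ = ‖α' r - e‖ := by rw [hunit t ht]; ring
            _ ≤ Λ * |r - t| := hlip r (hsub hr') t ht
            _ = Λ * (r - t) := by rw [abs_of_nonneg (by linarith [hr.1])]
        have := neg_abs_le (inner ℝ (α' r - e) e : ℝ)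
        rw [h1]; linarith
    have hgs : g t ≤ g s := hmono (left_mem_Icc.mpr hts) (right_mem_Icc.mpr hts) hts
    have hinner : (s - t) - Λ / 2 * (s - t) ^ 2 ≤ (inner ℝ (α s - α t) e : ℝ) := by
      simp only [hg] at hgs
      rw [inner_sub_left]
      have : (t : ℝ) - t = 0 := by ring
      nlinarith [hgs]
    calc (s - t) - Λ / 2 * (s - t) ^ 2 ≤ (inner ℝ (α s - α t) e : ℝ) := hinner
      _ ≤ ‖α s - α t‖ * ‖e‖ := real_inner_le_norm _ _
      _ = ‖α s - α t‖ := by rw [hunit t ht]; ring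
  intro s hs t ht hst
  have main : |s - t| - Λ / 2 * |s - t| ^ 2 ≤ ‖α s - α t‖ := by
    rcases le_total t s with h | h
    · rw [abs_of_nonneg (by linarith)]
      exact key s hs t ht h
    · rw [abs_of_nonpos (by linarith), norm_sub_rev]
      have := key t ht s hs h
      convert this using 2 <;> ring
  refine ⟨main, ?_⟩
  have h1 : Λ * |s - t| ≤ 1 := by
    rw [← le_div_iff₀' hΛ]; exact hst
  have h2 : Λ / 2 * |s - t| ^ 2 ≤ |s - t| / 2 := by
    nlinarith [abs_nonneg (s - t)]
  linarith
end

section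
/- Let α : ℝ → ℝⁿ be an ℓ-periodic C² unit-speed curve with ℓ > 0, and suppose |α''(t)| ≤ Λ for all t, where Λ > 0. Then the diameter of the image of α is at least 1/Λ. -/
open intervalIntegral Set

/-- A periodic `C²` unit-speed curve with curvature bounded by `Λ` has diameter at least `1/Λ`. -/
theorem stmt_2 (n : ℕ) (ℓ Λ : ℝ) (hℓ : 0 < ℓ) (hΛ : 0 < Λ)
    (α : ℝ → EuclideanSpace ℝ (Fin n))
    (hper : Function.Periodic α ℓ)
    (hC2 : ContDiff ℝ 2 α)
    (hunit : ∀ t, ‖deriv α t‖ = 1)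
    (hcurv : ∀ t, ‖deriv (deriv α) t‖ ≤ Λ) :
    1 / Λ ≤ Metric.diam (Set.range α) := by
  set D := Metric.diam (Set.range α) with hD
  -- range is bounded
  have hrange : α '' Set.Icc 0 (0 + ℓ) = Set.range α := hper.image_Icc hℓ 0
  have hcont : Continuous α := hC2.continuous
  have hbdd : Bornology.IsBounded (Set.range α) := by
    rw [← hrange]
    exact ((isCompact_Icc).image hcont).isBounded
  have hDle : ∀ t, ‖α t - α 0‖ ≤ D := by
    intro t
    have := Metric.dist_le_diam_of_mem hbdd (Set.mem_range_self t) (Set.mem_range_self 0)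
    simpa [dist_eq_norm] using this
  -- differentiability
  have hdiff : Differentiable ℝ α := hC2.differentiable (by norm_num)
  have hC1 : ContDiff ℝ 1 (deriv α) := by
    exact (contDiff_succ_iff_deriv.mp (show ContDiff ℝ (1 + 1) α by exact_mod_cast hC2)).2.2
  have hdiff' : Differentiable ℝ (deriv α) := hC1.differentiable (by norm_num)
  have hcont' : Continuous (deriv α) := hdiff'.continuous
  have hcont'' : Continuous (deriv (deriv α)) := (contDiff_succ_iff_deriv.mp (show ContDiff ℝ (0 + 1) (deriv α) by exact_mod_cast hC1)).2.2.continuous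
  -- the function f
  set f : ℝ → ℝ := fun t => inner ℝ (α t - α 0) (deriv α t) with hf
  have hfderiv : ∀ t, HasDerivAt f
      (inner ℝ (deriv α t) (deriv α t) + inner ℝ (α t - α 0) (deriv (deriv α) t)) t := by
    intro t
    have h1 : HasDerivAt (fun s => α s - α 0) (deriv α t) t :=
      ((hdiff t).hasDerivAt).sub_const (α 0)
    have h2 : HasDerivAt (deriv α) (deriv (deriv α) t) t := (hdiff' t).hasDerivAt
    have := h1.inner ℝ h2
    rw [add_comm] at this
    exact this
  set g : ℝ → ℝ := fun t =>
    inner ℝ (deriv α t) (deriv α t) + inner ℝ (α t - α 0) (deriv (deriv α) t) with hg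
  have hgcont : Continuous g := by
    apply Continuous.add
    · exact hcont'.inner hcont'
    · exact (hcont.sub continuous_const).inner hcont''
  have hint : ∫ t in (0:ℝ)..ℓ, g t = f ℓ - f 0 :=
    intervalIntegral.integral_eq_sub_of_hasDerivAt (fun t _ => hfderiv t)
      (hgcont.intervalIntegrable 0 ℓ)
  have hαℓ : α ℓ = α 0 := by simpa using hper 0
  have hf0 : f 0 = 0 := by simp [hf]
  have hfℓ : f ℓ = 0 := by simp [hf, hαℓ]
  -- compute integral of first summand
  have hone : ∀ t, (inner ℝ (deriv α t) (deriv α t) : ℝ) = 1 := by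
    intro t
    rw [real_inner_self_eq_norm_sq, hunit t]; norm_num
  have hsplit : ∫ t in (0:ℝ)..ℓ, g t =
      ℓ + ∫ t in (0:ℝ)..ℓ, inner ℝ (α t - α 0) (deriv (deriv α) t) := by
    rw [hg]
    rw [intervalIntegral.integral_add]
    · congr 1
      · simp only [hone]
        simp
    · exact (hcont'.inner hcont').intervalIntegrable 0 ℓ
    · exact ((hcont.sub continuous_const).inner hcont'').intervalIntegrable 0 ℓ
  have key : ℓ = - ∫ t in (0:ℝ)..ℓ, inner ℝ (α t - α 0) (deriv (deriv α) t) := by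
    have := hint
    rw [hsplit, hf0, hfℓ] at this
    linarith
  have habs : ℓ ≤ ℓ * (D * Λ) := by
    have hb : ∀ t ∈ Set.uIcc (0:ℝ) ℓ,
        ‖(inner ℝ (α t - α 0) (deriv (deriv α) t) : ℝ)‖ ≤ D * Λ := by
      intro t _
      calc ‖(inner ℝ (α t - α 0) (deriv (deriv α) t) : ℝ)‖
          ≤ ‖α t - α 0‖ * ‖deriv (deriv α) t‖ := norm_inner_le_norm _ _
        _ ≤ D * Λ := by
            apply mul_le_mul (hDle t) (hcurv t) (norm_nonneg _)
            exact (norm_nonneg _).trans (hDle 0)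
    have main : - ∫ t in (0:ℝ)..ℓ, (inner ℝ (α t - α 0) (deriv (deriv α) t) : ℝ) ≤ ℓ * (D * Λ) := calc
      - ∫ t in (0:ℝ)..ℓ, (inner ℝ (α t - α 0) (deriv (deriv α) t) : ℝ)
        ≤ ‖∫ t in (0:ℝ)..ℓ, (inner ℝ (α t - α 0) (deriv (deriv α) t) : ℝ)‖ :=
          neg_le_abs _
      _ ≤ D * Λ * |ℓ - 0| := intervalIntegral.norm_integral_le_of_norm_le_const
          (fun t ht => hb t (Set.uIoc_subset_uIcc ht))
      _ = ℓ * (D * Λ) := by rw [abs_of_nonneg (by linarith)]; ring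
    linarith [key, main]
  have h1 : 1 ≤ D * Λ := by
    by_contra h
    push_neg at h
    nlinarith
  rw [div_le_iff₀ hΛ]
  linarith [mul_comm D Λ]
end

section
/- Let π₁, π₂, π₁⁰, π₂⁰, M₁, M₂, N₁, N₂ be continuous linear endomorphisms of ℝⁿ satisfying, for i = 1, 2: πᵢ⁰ Mᵢ = Mᵢ = Mᵢ πᵢ, πᵢ Nᵢ = Nᵢ = Nᵢ πᵢ⁰, Nᵢ Mᵢ πᵢ = πᵢ, and Mᵢ Nᵢ πᵢ⁰ = πᵢ⁰. Then 2‖M₁ − M₂‖ ≤ 2‖M₁‖‖M₂‖‖N₂ − N₁‖ + ‖M₁ + M₂‖(‖π₂ − π₁‖ + ‖π₂⁰ − π₁⁰‖), where ‖·‖ denotes the operator norm. -/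
set_option maxHeartbeats 1000000


/-- The algebraic operator-norm inequality used to prove Hölder continuity of the
derivative of an inverse map. Here `ρ₁, ρ₂` play the role of `π₁⁰, π₂⁰`. -/
theorem stmt_6 (n : ℕ)
    (π₁ π₂ ρ₁ ρ₂ M₁ M₂ N₁ N₂ :
      EuclideanSpace ℝ (Fin n) →L[ℝ] EuclideanSpace ℝ (Fin n))
    (h1 : ρ₁.comp M₁ = M₁) (h1' : M₁.comp π₁ = M₁)
    (h2 : ρ₂.comp M₂ = M₂) (h2' : M₂.comp π₂ = M₂)
    (h3 : π₁.comp N₁ = N₁) (h3' : N₁.comp ρ₁ = N₁)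
    (h4 : π₂.comp N₂ = N₂) (h4' : N₂.comp ρ₂ = N₂)
    (h5 : (N₁.comp M₁).comp π₁ = π₁) (h6 : (N₂.comp M₂).comp π₂ = π₂)
    (h7 : (M₁.comp N₁).comp ρ₁ = ρ₁) (h8 : (M₂.comp N₂).comp ρ₂ = ρ₂) :
    2 * ‖M₁ - M₂‖ ≤ 2 * ‖M₁‖ * ‖M₂‖ * ‖N₂ - N₁‖ +
      ‖M₁ + M₂‖ * (‖π₂ - π₁‖ + ‖ρ₂ - ρ₁‖) := by
  simp only [← ContinuousLinearMap.mul_def] at h1 h1' h2 h2' h3 h3' h4 h4' h5 h6 h7 h8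
  -- basic products
  have e1 : N₂ * M₂ = π₂ := by rw [← h6, mul_assoc, h2']
  have e2 : N₁ * M₁ = π₁ := by rw [← h5, mul_assoc, h1']
  have e3 : M₂ * N₂ = ρ₂ := by rw [← h8, mul_assoc, h4']
  have e4 : M₁ * N₁ = ρ₁ := by rw [← h7, mul_assoc, h3']
  have key : M₁ * (N₂ - N₁) * M₂ + M₂ * (N₂ - N₁) * M₁
      - (M₁ + M₂) * (π₂ - π₁) - (ρ₂ - ρ₁) * (M₁ + M₂)
      = (2 : ℝ) • (M₁ - M₂) := by
    have expand : M₁ * (N₂ - N₁) * M₂ + M₂ * (N₂ - N₁) * M₁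
        = M₁ * (N₂ * M₂) - M₁ * N₁ * M₂ + M₂ * N₂ * M₁ - M₂ * (N₁ * M₁) := by
      simp only [mul_sub, sub_mul, mul_add, add_mul, mul_assoc]
      abel
    rw [expand, e1, e2, e3, e4]
    have expand2 : (M₁ + M₂) * (π₂ - π₁) + (ρ₂ - ρ₁) * (M₁ + M₂)
        = M₁ * π₂ + M₂ * π₂ - M₁ * π₁ - M₂ * π₁
          + ρ₂ * M₁ + ρ₂ * M₂ - ρ₁ * M₁ - ρ₁ * M₂ := by
      simp only [mul_sub, sub_mul, mul_add, add_mul, mul_assoc]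
      abel
    have h' : M₁ * π₂ - ρ₁ * M₂ + ρ₂ * M₁ - M₂ * π₁
        - ((M₁ + M₂) * (π₂ - π₁) + (ρ₂ - ρ₁) * (M₁ + M₂)) = (2 : ℝ) • (M₁ - M₂) := by
      rw [expand2, h1, h1', h2, h2']
      module
    rw [← h']
    abel
  have h2M : 2 * ‖M₁ - M₂‖ = ‖(2 : ℝ) • (M₁ - M₂)‖ := by
    rw [norm_smul (2:ℝ) (M₁ - M₂), Real.norm_ofNat]
  rw [h2M, ← key]
  have step1 : ‖M₁ * (N₂ - N₁) * M₂ + M₂ * (N₂ - N₁) * M₁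
      - (M₁ + M₂) * (π₂ - π₁) - (ρ₂ - ρ₁) * (M₁ + M₂)‖
      ≤ ‖M₁ * (N₂ - N₁) * M₂‖ + ‖M₂ * (N₂ - N₁) * M₁‖
        + ‖(M₁ + M₂) * (π₂ - π₁)‖ + ‖(ρ₂ - ρ₁) * (M₁ + M₂)‖ := by
    calc _ ≤ ‖M₁ * (N₂ - N₁) * M₂ + M₂ * (N₂ - N₁) * M₁ - (M₁ + M₂) * (π₂ - π₁)‖
              + ‖(ρ₂ - ρ₁) * (M₁ + M₂)‖ := norm_sub_le _ _
      _ ≤ ‖M₁ * (N₂ - N₁) * M₂ + M₂ * (N₂ - N₁) * M₁‖ + ‖(M₁ + M₂) * (π₂ - π₁)‖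
              + ‖(ρ₂ - ρ₁) * (M₁ + M₂)‖ := by
            gcongr; exact norm_sub_le _ _
      _ ≤ _ := by
            have := norm_add_le (M₁ * (N₂ - N₁) * M₂) (M₂ * (N₂ - N₁) * M₁)
            linarith
  refine step1.trans ?_
  have b1 : ‖M₁ * (N₂ - N₁) * M₂‖ ≤ ‖M₁‖ * ‖N₂ - N₁‖ * ‖M₂‖ :=
    (norm_mul_le _ _).trans (by gcongr; exact norm_mul_le _ _)
  have b2 : ‖M₂ * (N₂ - N₁) * M₁‖ ≤ ‖M₂‖ * ‖N₂ - N₁‖ * ‖M₁‖ :=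
    (norm_mul_le _ _).trans (by gcongr; exact norm_mul_le _ _)
  have b3 : ‖(M₁ + M₂) * (π₂ - π₁)‖ ≤ ‖M₁ + M₂‖ * ‖π₂ - π₁‖ := norm_mul_le _ _
  have b4 : ‖(ρ₂ - ρ₁) * (M₁ + M₂)‖ ≤ ‖ρ₂ - ρ₁‖ * ‖M₁ + M₂‖ := norm_mul_le _ _
  nlinarith [norm_nonneg (M₁ - M₂)]
end
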